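/- Correctness of the prefix-doubling Check procedure: for every natural number t, D_t(n,m) ≤ t if and only if d(A,B) ≤ t; moreover, if d(A,B) ≤ t then D_t(n,m) = d(A,B) (as elements of ℕ∞). Hence, if the DP restricted to the diagonal band of half-width t returns a value σ with σ ≤ t, then σ is the true edit distance, and otherwise the true edit distance exceeds t. -/

import Mathlib

/-- Restored from older Mathlib (removed since): costs of the edit operations. -/
structure Levenshtein.Cost (α β δ : Type*) where
  delete : α → δ
  insert : β → δ
  substitute : α → β → δ

/-- Restored from older Mathlib: the unit cost. -/
def Levenshtein.defaultCost {α : Type*} [DecidableEq α] : Levenshtein.Cost α α ℕ where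
  delete _ := 1
  insert _ := 1
  substitute a b := if a = b then 0 else 1

/-- Restored from older Mathlib: the Levenshtein distance, given by its characterizing
recursion (`levenshtein_nil_nil`, `levenshtein_nil_cons`, `levenshtein_cons_nil`,
`levenshtein_cons_cons`). -/
def levenshtein {α β δ : Type*} [AddZeroClass δ] [Min δ] (C : Levenshtein.Cost α β δ) :
    List α → List β → δ
  | [], [] => 0
  | [], y :: ys => C.insert y + levenshtein C [] ys
  | x :: xs, [] => C.delete x + levenshtein C xs []
  | x :: xs, y :: ys =>
      min (C.delete x + levenshtein C xs (y :: ys))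
        (min (C.insert y + levenshtein C (x :: xs) ys) (C.substitute x y + levenshtein C xs ys))

/-- The unit-cost Levenshtein edit distance. -/
def editDist {α : Type*} [DecidableEq α] (A B : List α) : ℕ :=
  levenshtein Levenshtein.defaultCost A B

/-- The band-restricted DP table `D_t` with values in `ℕ∞`: entries outside the diagonal band
`|i - j| ≤ t` are `⊤`, `D_t(0,0) = 0`, and otherwise `D_t(i,j)` is the minimum of the
applicable terms (diagonal with substitution cost, vertical `+1`, horizontal `+1`). -/
noncomputable def bandDP {α : Type*} [DecidableEq α] (A B : List α) (t : ℕ) : ℕ → ℕ → ℕ∞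
  | i, j =>
    if (t : ℤ) < |(i : ℤ) - (j : ℤ)| then ⊤
    else
      match i, j with
      | 0, 0 => 0
      | i + 1, 0 => bandDP A B t i 0 + 1
      | 0, j + 1 => bandDP A B t 0 j + 1
      | i + 1, j + 1 =>
          min (bandDP A B t i j + (if A[i]? = B[j]? then (0 : ℕ∞) else 1))
            (min (bandDP A B t i (j + 1) + 1) (bandDP A B t (i + 1) j + 1))
  termination_by i j => i + j

theorem levenshtein_nil_nil {α β δ : Type*} [AddZeroClass δ] [Min δ] (C : Levenshtein.Cost α β δ) :
    levenshtein C [] [] = 0 := by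
  rw [levenshtein]

theorem levenshtein_nil_cons {α β δ : Type*} [AddZeroClass δ] [Min δ] (C : Levenshtein.Cost α β δ)
    (y : β) (ys : List β) :
    levenshtein C [] (y :: ys) = C.insert y + levenshtein C [] ys := by
  rw [levenshtein]

theorem levenshtein_cons_nil {α β δ : Type*} [AddZeroClass δ] [Min δ] (C : Levenshtein.Cost α β δ)
    (x : α) (xs : List α) :
    levenshtein C (x :: xs) [] = C.delete x + levenshtein C xs [] := by
  rw [levenshtein]

theorem levenshtein_cons_cons {α β δ : Type*} [AddZeroClass δ] [Min δ] (C : Levenshtein.Cost α β δ)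
    (x : α) (xs : List α) (y : β) (ys : List β) :
    levenshtein C (x :: xs) (y :: ys) =
      min (C.delete x + levenshtein C xs (y :: ys))
        (min (C.insert y + levenshtein C (x :: xs) ys) (C.substitute x y + levenshtein C xs ys)) := by
  rw [levenshtein]

@[simp] theorem Levenshtein.defaultCost_delete {α : Type*} [DecidableEq α] (a : α) :
    (Levenshtein.defaultCost : Levenshtein.Cost α α ℕ).delete a = 1 := rfl

@[simp] theorem Levenshtein.defaultCost_insert {α : Type*} [DecidableEq α] (a : α) :
    (Levenshtein.defaultCost : Levenshtein.Cost α α ℕ).insert a = 1 := rfl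

@[simp] theorem Levenshtein.defaultCost_substitute {α : Type*} [DecidableEq α] (a b : α) :
    (Levenshtein.defaultCost : Levenshtein.Cost α α ℕ).substitute a b = if a = b then 0 else 1 := rfl

namespace BandAux

variable {α : Type*} [DecidableEq α]

/-! ### Edit sequences and basic facts about `editDist` -/

inductive EditSeq : List α → List α → ℕ → Prop
  | nil : EditSeq [] [] 0
  | sub (a b : α) {A B : List α} {k : ℕ} (h : EditSeq A B k) :
      EditSeq (a :: A) (b :: B) (k + if a = b then 0 else 1)
  | del (a : α) {A B : List α} {k : ℕ} (h : EditSeq A B k) : EditSeq (a :: A) B (k + 1)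
  | ins (b : α) {A B : List α} {k : ℕ} (h : EditSeq A B k) : EditSeq A (b :: B) (k + 1)

theorem editDist_nil_left (B : List α) : editDist [] B = B.length := by
  induction B with
  | nil => simp [editDist, levenshtein_nil_nil]
  | cons b B ih => simp [editDist, levenshtein_nil_cons] at *; omega

theorem editDist_nil_right (A : List α) : editDist A [] = A.length := by
  induction A with
  | nil => simp [editDist, levenshtein_nil_nil]
  | cons a A ih => simp [editDist, levenshtein_cons_nil] at *; omega

theorem editDist_cons_cons (a b : α) (A B : List α) :
    editDist (a :: A) (b :: B) =
      min (editDist A B + if a = b then 0 else 1)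
        (min (editDist A (b :: B) + 1) (editDist (a :: A) B + 1)) := by
  rw [editDist, levenshtein_cons_cons]
  simp only [Levenshtein.defaultCost_delete, Levenshtein.defaultCost_insert,
    Levenshtein.defaultCost_substitute, editDist]
  omega

theorem editDist_cons_left_le (a : α) (A B : List α) :
    editDist (a :: A) B ≤ editDist A B + 1 := by
  cases B with
  | nil => rw [editDist_nil_right, editDist_nil_right]; simp
  | cons b B => rw [editDist_cons_cons]; omega

theorem editDist_cons_right_le (b : α) (A B : List α) :
    editDist A (b :: B) ≤ editDist A B + 1 := by
  cases A with
  | nil => rw [editDist_nil_left, editDist_nil_left]; simp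
  | cons a A => rw [editDist_cons_cons]; omega

theorem editDist_le_of_editSeq {A B : List α} {k : ℕ} (h : EditSeq A B k) :
    editDist A B ≤ k := by
  induction h with
  | nil => simp [editDist, levenshtein_nil_nil]
  | sub a b h ih => rw [editDist_cons_cons]; omega
  | @del a A B k h ih => have := editDist_cons_left_le a A B; omega
  | @ins b A B k h ih => have := editDist_cons_right_le b A B; omega

theorem editSeq_editDist (A B : List α) : EditSeq A B (editDist A B) := by
  induction A generalizing B with
  | nil =>
      induction B with
      | nil => rw [editDist_nil_left]; exact .nil
      | cons b B ihB => rw [editDist_nil_left] at *; exact .ins b ihB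
  | cons a A ihA =>
      induction B with
      | nil =>
          rw [editDist_nil_right]
          have := ihA []
          rw [editDist_nil_right] at this
          exact .del a this
      | cons b B ihB =>
          rw [editDist_cons_cons]
          rcases Nat.lt_trichotomy (editDist A B + if a = b then 0 else 1)
              (min (editDist A (b :: B) + 1) (editDist (a :: A) B + 1)) with h | h | h
          · rw [min_eq_left h.le]; exact .sub a b (ihA B)
          · rw [min_eq_left h.le]; exact .sub a b (ihA B)
          · rw [min_eq_right h.le]
            rcases le_total (editDist A (b :: B) + 1) (editDist (a :: A) B + 1) with h2 | h2
            · rw [min_eq_left h2]; exact .del a (ihA (b :: B))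
            · rw [min_eq_right h2]; exact .ins b ihB

theorem editSeq_length {A B : List α} {k : ℕ} (h : EditSeq A B k) :
    A.length ≤ B.length + k ∧ B.length ≤ A.length + k := by
  induction h with
  | nil => simp
  | sub a b h ih => simp at *; omega
  | del a h ih => simp at *; omega
  | ins b h ih => simp at *; omega

theorem editSeq_snoc_sub (a b : α) {A B : List α} {k : ℕ} (h : EditSeq A B k) :
    EditSeq (A ++ [a]) (B ++ [b]) (k + if a = b then 0 else 1) := by
  induction h with
  | nil => simpa using EditSeq.sub a b .nil
  | sub a' b' h ih =>
      have := EditSeq.sub a' b' ih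
      convert this using 1 <;> try simp
      all_goals omega
  | del a' h ih =>
      have := EditSeq.del a' ih
      convert this using 1 <;> try simp
      all_goals omega
  | ins b' h ih =>
      have := EditSeq.ins b' ih
      convert this using 1 <;> try simp
      all_goals omega

theorem editSeq_snoc_del (a : α) {A B : List α} {k : ℕ} (h : EditSeq A B k) :
    EditSeq (A ++ [a]) B (k + 1) := by
  induction h with
  | nil => simpa using EditSeq.del a .nil
  | sub a' b' h ih =>
      have := EditSeq.sub a' b' ih
      convert this using 1 <;> try simp
      all_goals omega
  | del a' h ih => exact EditSeq.del a' ih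
  | ins b' h ih => exact EditSeq.ins b' ih

theorem editSeq_snoc_ins (b : α) {A B : List α} {k : ℕ} (h : EditSeq A B k) :
    EditSeq A (B ++ [b]) (k + 1) := by
  induction h with
  | nil => simpa using EditSeq.ins b .nil
  | sub a' b' h ih =>
      have := EditSeq.sub a' b' ih
      convert this using 1 <;> try simp
      all_goals omega
  | del a' h ih => exact EditSeq.del a' ih
  | ins b' h ih => exact EditSeq.ins b' ih

theorem editSeq_reverse {A B : List α} {k : ℕ} (h : EditSeq A B k) :
    EditSeq A.reverse B.reverse k := by
  induction h with
  | nil => exact .nil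
  | sub a b h ih => simpa using editSeq_snoc_sub a b ih
  | del a h ih => simpa using editSeq_snoc_del a ih
  | ins b h ih => simpa using editSeq_snoc_ins b ih

theorem editDist_reverse (A B : List α) : editDist A.reverse B.reverse = editDist A B := by
  apply le_antisymm
  · exact editDist_le_of_editSeq (editSeq_reverse (editSeq_editDist A B))
  · have := editDist_le_of_editSeq (editSeq_reverse (editSeq_editDist A.reverse B.reverse))
    simpa using this

theorem editDist_snoc_snoc (a b : α) (A B : List α) :
    editDist (A ++ [a]) (B ++ [b]) =
      min (editDist A B + if a = b then 0 else 1)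
        (min (editDist A (B ++ [b]) + 1) (editDist (A ++ [a]) B + 1)) := by
  rw [← editDist_reverse, ← editDist_reverse A B, ← editDist_reverse A (B ++ [b]),
    ← editDist_reverse (A ++ [a]) B]
  simp only [List.reverse_append, List.reverse_cons, List.reverse_nil, List.nil_append,
    List.singleton_append]
  exact editDist_cons_cons a b A.reverse B.reverse

/-! ### The prefix distance function `gd` -/

/-- Edit distance between prefixes. -/
def gd (A B : List α) (i j : ℕ) : ℕ := editDist (A.take i) (B.take j)

theorem gd_left (A B : List α) {i : ℕ} (hi : i ≤ A.length) : gd A B i 0 = i := by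
  simp [gd, editDist_nil_right, List.length_take, Nat.min_eq_left hi]

theorem gd_right (A B : List α) {j : ℕ} (hj : j ≤ B.length) : gd A B 0 j = j := by
  simp [gd, editDist_nil_left, List.length_take, Nat.min_eq_left hj]

theorem gd_rec (A B : List α) {i j : ℕ} (hi : i < A.length) (hj : j < B.length) :
    gd A B (i+1) (j+1) =
      min (gd A B i j + if A[i] = B[j] then 0 else 1)
        (min (gd A B i (j+1) + 1) (gd A B (i+1) j + 1)) := by
  unfold gd
  rw [List.take_succ, List.take_succ, List.getElem?_eq_getElem hi, List.getElem?_eq_getElem hj]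
  simp only [Option.toList_some]
  exact editDist_snoc_snoc _ _ _ _

theorem gd_band (A B : List α) {i j : ℕ} (hi : i ≤ A.length) (hj : j ≤ B.length) :
    i ≤ j + gd A B i j ∧ j ≤ i + gd A B i j := by
  have h := editSeq_length (editSeq_editDist (A.take i) (B.take j))
  simpa [List.length_take, Nat.min_eq_left hi, Nat.min_eq_left hj, gd] using h

/-! ### Unfolding lemmas for `bandDP` -/

variable (A B : List α) (t : ℕ)

theorem bandDP_zero_zero : bandDP A B t 0 0 = 0 := by
  rw [bandDP]; simp

theorem bandDP_succ_zero (i : ℕ) :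
    bandDP A B t (i+1) 0 = if (t:ℤ) < (i:ℤ) + 1 then ⊤ else bandDP A B t i 0 + 1 := by
  rw [bandDP]
  norm_num
  rw [abs_of_nonneg (by positivity)]
  simp only [show ((t:ℤ) < (i:ℤ) + 1 ↔ t ≤ i) by omega]

theorem bandDP_zero_succ (j : ℕ) :
    bandDP A B t 0 (j+1) = if (t:ℤ) < (j:ℤ) + 1 then ⊤ else bandDP A B t 0 j + 1 := by
  rw [bandDP]
  norm_num
  rw [abs_of_nonpos (by omega)]
  norm_num

theorem bandDP_succ_succ (i j : ℕ) :
    bandDP A B t (i+1) (j+1) =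
      if (t:ℤ) < |(i:ℤ) - (j:ℤ)| then ⊤
      else min (bandDP A B t i j + (if A[i]? = B[j]? then (0 : ℕ∞) else 1))
            (min (bandDP A B t i (j + 1) + 1) (bandDP A B t (i + 1) j + 1)) := by
  rw [bandDP]
  have : |(i:ℤ) + 1 - ((j:ℤ) + 1)| = |(i:ℤ) - (j:ℤ)| := by ring_nf
  push_cast
  simp only [this]

theorem cost_cast {c : Prop} [Decidable c] :
    (if c then (0:ℕ∞) else 1) = ((if c then 0 else 1 : ℕ) : ℕ∞) := by
  split <;> simp

/-! ### The two key lemmas -/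

theorem cast_gd_le_bandDP :
    ∀ N i j, i + j ≤ N → i ≤ A.length → j ≤ B.length →
      (gd A B i j : ℕ∞) ≤ bandDP A B t i j := by
  intro N
  induction N using Nat.strong_induction_on with
  | _ N IH =>
  intro i j hN hi hj
  rcases i with _ | i <;> rcases j with _ | j
  · rw [bandDP_zero_zero, gd_left A B hi]; simp
  · rw [bandDP_zero_succ]
    split
    · exact le_top
    · have h1 := IH (0 + j) (by omega) 0 j le_rfl hi (by omega)
      rw [gd_right A B hj, gd_right A B (by omega : j ≤ B.length)] at *
      push_cast
      exact add_le_add_left h1 1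
  · rw [bandDP_succ_zero]
    split
    · exact le_top
    · have h1 := IH (i + 0) (by omega) i 0 le_rfl (by omega) hj
      rw [gd_left A B hi, gd_left A B (by omega : i ≤ A.length)] at *
      push_cast
      exact add_le_add_left h1 1
  · rw [bandDP_succ_succ]
    split
    · exact le_top
    · have hii : i < A.length := by omega
      have hjj : j < B.length := by omega
      have hrec := gd_rec A B hii hjj
      simp only [List.getElem?_eq_getElem hii, List.getElem?_eq_getElem hjj, Option.some.injEq]
      have hd := IH (i + j) (by omega) i j le_rfl (by omega) (by omega)
      have hv := IH (i + (j+1)) (by omega) i (j+1) le_rfl (by omega) hj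
      have hh := IH ((i+1) + j) (by omega) (i+1) j le_rfl hi (by omega)
      apply le_min
      · calc ((gd A B (i+1) (j+1) : ℕ) : ℕ∞)
            ≤ ((gd A B i j + if A[i] = B[j] then 0 else 1 : ℕ) : ℕ∞) := by
              rw [hrec]; exact_mod_cast min_le_left _ _
          _ ≤ bandDP A B t i j + (if A[i] = B[j] then (0:ℕ∞) else 1) := by
              rw [cost_cast]
              push_cast
              exact add_le_add_left hd _
      · apply le_min
        · calc ((gd A B (i+1) (j+1) : ℕ) : ℕ∞)
              ≤ ((gd A B i (j+1) + 1 : ℕ) : ℕ∞) := by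
                rw [hrec]; exact_mod_cast le_trans (min_le_right _ _) (min_le_left _ _)
            _ ≤ bandDP A B t i (j+1) + 1 := by
                push_cast
                exact add_le_add_left hv 1
        · calc ((gd A B (i+1) (j+1) : ℕ) : ℕ∞)
              ≤ ((gd A B (i+1) j + 1 : ℕ) : ℕ∞) := by
                rw [hrec]; exact_mod_cast le_trans (min_le_right _ _) (min_le_right _ _)
            _ ≤ bandDP A B t (i+1) j + 1 := by
                push_cast
                exact add_le_add_left hh 1

theorem bandDP_eq_gd :
    ∀ N i j, i + j ≤ N → i ≤ A.length → j ≤ B.length → gd A B i j ≤ t →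
      bandDP A B t i j = (gd A B i j : ℕ∞) := by
  intro N
  induction N using Nat.strong_induction_on with
  | _ N IH =>
  intro i j hN hi hj hgt
  rcases i with _ | i <;> rcases j with _ | j
  · rw [bandDP_zero_zero, gd_left A B hi]; simp
  · rw [gd_right A B hj] at *
    rw [bandDP_zero_succ, if_neg (by push_cast; omega)]
    have h1 := IH (0 + j) (by omega) 0 j le_rfl hi (by omega)
      (by rw [gd_right A B (by omega : j ≤ B.length)]; omega)
    rw [h1, gd_right A B (by omega : j ≤ B.length)]
    push_cast
    ring
  · rw [gd_left A B hi] at *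
    rw [bandDP_succ_zero, if_neg (by push_cast; omega)]
    have h1 := IH (i + 0) (by omega) i 0 le_rfl (by omega) hj
      (by rw [gd_left A B (by omega : i ≤ A.length)]; omega)
    rw [h1, gd_left A B (by omega : i ≤ A.length)]
    push_cast
    ring
  · have hii : i < A.length := by omega
    have hjj : j < B.length := by omega
    have hrec := gd_rec A B hii hjj
    have hband := gd_band A B hi hj
    refine le_antisymm ?_ (cast_gd_le_bandDP A B t ((i+1)+(j+1)) (i+1) (j+1) le_rfl hi hj)
    rw [bandDP_succ_succ, if_neg ?bnd]
    case bnd =>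
      rw [not_lt, abs_sub_le_iff]
      constructor <;> push_cast <;> omega
    simp only [List.getElem?_eq_getElem hii, List.getElem?_eq_getElem hjj, Option.some.injEq]
    rcases min_cases (gd A B i j + if A[i] = B[j] then 0 else 1)
        (min (gd A B i (j+1) + 1) (gd A B (i+1) j + 1)) with ⟨he, _⟩ | ⟨he, _⟩
    · -- diagonal branch attains the min
      have hd : gd A B i j ≤ t := by omega
      have h1 := IH (i + j) (by omega) i j le_rfl (by omega) (by omega) hd
      refine le_trans (min_le_left _ _) ?_
      rw [h1, cost_cast, hrec, he]
      push_cast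
      rfl
    · rcases min_cases (gd A B i (j+1) + 1) (gd A B (i+1) j + 1) with ⟨he2, _⟩ | ⟨he2, _⟩
      · have hv : gd A B i (j+1) ≤ t := by omega
        have h1 := IH (i + (j+1)) (by omega) i (j+1) le_rfl (by omega) hj hv
        refine le_trans (min_le_right _ _) (le_trans (min_le_left _ _) ?_)
        rw [h1, hrec, he, he2]
        push_cast
        rfl
      · have hh : gd A B (i+1) j ≤ t := by omega
        have h1 := IH ((i+1) + j) (by omega) (i+1) j le_rfl hi (by omega) hh
        refine le_trans (min_le_right _ _) (le_trans (min_le_right _ _) ?_)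
        rw [h1, hrec, he, he2]
        push_cast
        rfl

end BandAux

open BandAux in
/-- Correctness of the prefix-doubling `Check` procedure: the band-restricted DP value at the
sink is at most `t` iff the true edit distance is at most `t`, and in that case the DP value
equals the true edit distance. -/
theorem bandDP_check_correct {α : Type*} [DecidableEq α] (A B : List α) (t : ℕ) :
    (bandDP A B t A.length B.length ≤ (t : ℕ∞) ↔ editDist A B ≤ t) ∧
    (editDist A B ≤ t → bandDP A B t A.length B.length = (editDist A B : ℕ∞)) := by
  have hg : gd A B A.length B.length = editDist A B := by
    simp [gd, List.take_length]
  have key : editDist A B ≤ t → bandDP A B t A.length B.length = (editDist A B : ℕ∞) := by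
    intro h
    rw [← hg]
    exact bandDP_eq_gd A B t (A.length + B.length) A.length B.length le_rfl le_rfl le_rfl
      (by rw [hg]; exact h)
  refine ⟨⟨fun hle => ?_, fun hle => ?_⟩, key⟩
  · have h1 := cast_gd_le_bandDP A B t (A.length + B.length) A.length B.length le_rfl le_rfl le_rfl
    rw [hg] at h1
    exact_mod_cast le_trans h1 hle
  · rw [key hle]
    exact_mod_cast hle
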